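/- Let T > 0, let g ∈ L¹(0,T) be nonnegative, and let δ < 2 with δ ≠ 1. Then the double integral ∫₀ᵀ ∫₀ᵀ |t − s|^{−δ} (∫_{min(s,t)}^{max(s,t)} g(r) dr) dt ds is finite. -/

import Mathlib

open MeasureTheory
open scoped ENNReal

lemma stmt11_aux (T p : ℝ) (hT : 0 < T) (hp0 : 0 ≤ p) (hp1 : p < 1) :
    ∃ C : ℝ≥0∞, C < ⊤ ∧ ∀ r ∈ Set.Ioo (0:ℝ) T,
      (∫⁻ x in Set.Ioo (0:ℝ) T, ENNReal.ofReal (|x - r| ^ (-p))) ≤ C := by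
  set F : ℝ → ℝ≥0∞ := (Set.Ioo (-T) T).indicator (fun y => ENNReal.ofReal (|y| ^ (-p))) with hF
  refine ⟨∫⁻ y, F y, ?_, ?_⟩
  · have hB : IntegrableOn (fun y => |y| ^ (-p)) (Set.Ioo (0:ℝ) T) := by
      have h1 : IntegrableOn (fun y : ℝ => y ^ (-p)) (Set.Ioo (0:ℝ) T) :=
        (intervalIntegral.integrableOn_Ioo_rpow_iff hT).mpr (by linarith)
      exact h1.congr_fun (fun x hx => by rw [abs_of_pos hx.1]) measurableSet_Ioo
    have hBlt : (∫⁻ y in Set.Ioo (0:ℝ) T, ENNReal.ofReal (|y| ^ (-p))) < ⊤ :=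
      hB.lintegral_lt_top
    have hneg : (∫⁻ y in Set.Ioo (-T) (0:ℝ), ENNReal.ofReal (|y| ^ (-p)))
        = ∫⁻ y in Set.Ioo (0:ℝ) T, ENNReal.ofReal (|y| ^ (-p)) := by
      have := (Measure.measurePreserving_neg (volume : Measure ℝ)).setLIntegral_comp_emb
        (MeasurableEquiv.neg ℝ).measurableEmbedding
        (fun y => ENNReal.ofReal (|y| ^ (-p))) (Set.Ioo (0:ℝ) T)
      simp only [MeasurableEquiv.neg_apply, abs_neg, Set.image_neg_Ioo, neg_zero] at this
      rw [← this]
    rw [hF, lintegral_indicator measurableSet_Ioo]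
    calc (∫⁻ y in Set.Ioo (-T) T, ENNReal.ofReal (|y| ^ (-p)))
        ≤ ∫⁻ y in Set.Ioo (-T) (0:ℝ) ∪ Set.Ico (0:ℝ) T, ENNReal.ofReal (|y| ^ (-p)) := by
          apply lintegral_mono_set
          intro y hy
          rcases lt_or_ge y 0 with h | h
          · exact Or.inl ⟨hy.1, h⟩
          · exact Or.inr ⟨h, hy.2⟩
      _ ≤ (∫⁻ y in Set.Ioo (-T) (0:ℝ), ENNReal.ofReal (|y| ^ (-p)))
            + ∫⁻ y in Set.Ico (0:ℝ) T, ENNReal.ofReal (|y| ^ (-p)) := lintegral_union_le _ _ _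
      _ < ⊤ := by
          rw [hneg, ← Measure.restrict_congr_set Ioo_ae_eq_Ico]
          exact ENNReal.add_lt_top.2 ⟨hBlt, hBlt⟩
  · intro r hr
    have h1 : (∫⁻ x in Set.Ioo (0:ℝ) T, ENNReal.ofReal (|x - r| ^ (-p)))
        = ∫⁻ x in Set.Ioo (0:ℝ) T, F (x + (-r)) := by
      apply setLIntegral_congr_fun_ae measurableSet_Ioo
      filter_upwards with x hx
      have hmem : x + -r ∈ Set.Ioo (-T) T :=
        ⟨by linarith [hr.2, hx.1], by linarith [hr.1, hx.2]⟩
      rw [hF, Set.indicator_of_mem hmem, sub_eq_add_neg]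
    rw [h1]
    calc (∫⁻ x in Set.Ioo (0:ℝ) T, F (x + (-r)))
        ≤ ∫⁻ x, F (x + (-r)) := lintegral_mono' Measure.restrict_le_self le_rfl
      _ = ∫⁻ y, F y := lintegral_add_right_eq_self F (-r)


/-- Let `T > 0`, let `g ∈ L¹(0,T)` be nonnegative, and let `δ < 2` with
`δ ≠ 1`.  Then the double integral
`∫₀ᵀ ∫₀ᵀ |t − s|^{−δ} (∫_{min(s,t)}^{max(s,t)} g(r) dr) dt ds` is finite. -/
theorem stmt_11 (T : ℝ) (hT : 0 < T) (g : ℝ → ℝ)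
    (hg : IntegrableOn g (Set.Ioo 0 T))
    (hg0 : ∀ r ∈ Set.Ioo (0 : ℝ) T, 0 ≤ g r)
    (δ : ℝ) (hδ2 : δ < 2) (hδ1 : δ ≠ 1) :
    (∫⁻ s in Set.Ioo (0 : ℝ) T, ∫⁻ t in Set.Ioo (0 : ℝ) T,
        ENNReal.ofReal (|t - s| ^ (-δ) * ∫ r in Set.Ioo (min s t) (max s t), g r)) < ⊤ := by
  set I := Set.Ioo (0:ℝ) T with hIdef
  have hInn : 0 ≤ᵐ[volume.restrict I] g :=
    (ae_restrict_iff' measurableSet_Ioo).2 (ae_of_all _ hg0)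
  by_cases hδ0 : δ ≤ 0
  · -- easy case: bounded integrand
    set c : ℝ≥0∞ := ENNReal.ofReal ((2*T) ^ (-δ) * ∫ r in I, g r) with hc
    have hbound : ∀ s ∈ I, ∀ t ∈ I,
        ENNReal.ofReal (|t - s| ^ (-δ) * ∫ r in Set.Ioo (min s t) (max s t), g r) ≤ c := by
      intro s hs t ht
      apply ENNReal.ofReal_le_ofReal
      have hAI : Set.Ioo (min s t) (max s t) ⊆ I :=
        Set.Ioo_subset_Ioo (lt_min hs.1 ht.1).le (max_lt hs.2 ht.2).le
      have h1 : |t - s| ^ (-δ) ≤ (2*T) ^ (-δ) := by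
        apply Real.rpow_le_rpow (abs_nonneg _) ?_ (by linarith)
        calc |t - s| ≤ |t| + |s| := abs_sub t s
          _ ≤ 2 * T := by
              rw [abs_of_pos hs.1, abs_of_pos ht.1]; linarith [hs.2, ht.2]
      have h2 : (∫ r in Set.Ioo (min s t) (max s t), g r) ≤ ∫ r in I, g r :=
        setIntegral_mono_set hg hInn (HasSubset.Subset.eventuallyLE hAI)
      have h3 : 0 ≤ ∫ r in Set.Ioo (min s t) (max s t), g r :=
        setIntegral_nonneg measurableSet_Ioo (fun r hr => hg0 r (hAI hr))
      exact mul_le_mul h1 h2 h3 (Real.rpow_nonneg (by linarith) _)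
    calc (∫⁻ s in I, ∫⁻ t in I,
          ENNReal.ofReal (|t - s| ^ (-δ) * ∫ r in Set.Ioo (min s t) (max s t), g r))
        ≤ ∫⁻ _ in I, ∫⁻ _ in I, c :=
          lintegral_mono_ae ((ae_restrict_iff' measurableSet_Ioo).2 (ae_of_all _ fun s hs =>
            lintegral_mono_ae ((ae_restrict_iff' measurableSet_Ioo).2 (ae_of_all _ fun t ht =>
              hbound s hs t ht))))
      _ = c * volume I * volume I := by
          simp [lintegral_const, Measure.restrict_apply, mul_assoc, mul_comm, mul_left_comm]
      _ < ⊤ := by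
          have hvol : volume I < ⊤ := by simp [hIdef]
          exact ENNReal.mul_lt_top (ENNReal.mul_lt_top ENNReal.ofReal_lt_top hvol) hvol
  · push_neg at hδ0
    have hp0 : (0:ℝ) ≤ δ/2 := by linarith
    have hp1 : δ/2 < 1 := by linarith
    obtain ⟨C, hC, hCb⟩ := stmt11_aux T (δ/2) hT hp0 hp1
    set G : ℝ → ℝ≥0∞ := fun r => ENNReal.ofReal (g r) with hG
    set φ : ℝ → ℝ → ℝ≥0∞ := fun a b => ENNReal.ofReal (|a - b| ^ (-(δ/2))) with hφ
    have hGmeas : AEMeasurable G (volume.restrict I) := hg.1.aemeasurable.ennreal_ofReal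
    have hGlt : (∫⁻ r in I, G r) < ⊤ := hg.lintegral_lt_top
    -- key pointwise estimate
    have key : ∀ s ∈ I, ∀ t ∈ I,
        ENNReal.ofReal (|t - s| ^ (-δ) * ∫ r in Set.Ioo (min s t) (max s t), g r)
          ≤ ∫⁻ r in I, φ s r * φ t r * G r := by
      intro s hs t ht
      set A := Set.Ioo (min s t) (max s t) with hA
      have hAI : A ⊆ I := Set.Ioo_subset_Ioo (lt_min hs.1 ht.1).le (max_lt hs.2 ht.2).le
      have hint : IntegrableOn g A := hg.mono_set hAI
      have hnn : 0 ≤ᵐ[volume.restrict A] g :=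
        (ae_restrict_iff' measurableSet_Ioo).2 (ae_of_all _ (fun r hr => hg0 r (hAI hr)))
      rw [ENNReal.ofReal_mul (Real.rpow_nonneg (abs_nonneg _) _),
        MeasureTheory.ofReal_integral_eq_lintegral_ofReal hint hnn,
        ← lintegral_const_mul' _ _ ENNReal.ofReal_ne_top]
      refine le_trans (lintegral_mono_ae ?_) (lintegral_mono_set hAI)
      refine (ae_restrict_iff' measurableSet_Ioo).2 (ae_of_all _ ?_)
      intro r hr
      apply mul_le_mul_left
      obtain ⟨hr1, hr2⟩ := hr
      have habs : max s t - min s t = |t - s| := max_sub_min_eq_abs s t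
      have h0 : 0 < |t - s| := by rw [← habs]; linarith
      have hsne : s ≠ r := by
        rcases le_total s t with h | h
        · rw [min_eq_left h] at hr1; exact (ne_of_lt hr1)
        · rw [max_eq_left h] at hr2; exact (ne_of_gt hr2)
      have htne : t ≠ r := by
        rcases le_total s t with h | h
        · rw [max_eq_right h] at hr2; exact (ne_of_gt hr2)
        · rw [min_eq_right h] at hr1; exact (ne_of_lt hr1)
      have hsr0 : 0 < |s - r| := abs_pos.2 (sub_ne_zero.2 hsne)
      have htr0 : 0 < |t - r| := abs_pos.2 (sub_ne_zero.2 htne)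
      have hminmax := min_le_left s t
      have hminmax2 := min_le_right s t
      have hmaxs := le_max_left s t
      have hmaxt := le_max_right s t
      have hsrle : |s - r| ≤ |t - s| := by
        rw [← habs]; rw [abs_le]; constructor <;> linarith
      have htrle : |t - r| ≤ |t - s| := by
        rw [← habs]; rw [abs_le]; constructor <;> linarith
      have hsplit : |t - s| ^ (-δ) = |t - s| ^ (-(δ/2)) * |t - s| ^ (-(δ/2)) := by
        rw [← Real.rpow_add h0]; ring_nf
      rw [hsplit, ENNReal.ofReal_mul (Real.rpow_nonneg (abs_nonneg _) _)]
      exact mul_le_mul'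
        (ENNReal.ofReal_le_ofReal (Real.rpow_le_rpow_of_nonpos hsr0 hsrle (by linarith)))
        (ENNReal.ofReal_le_ofReal (Real.rpow_le_rpow_of_nonpos htr0 htrle (by linarith)))
    -- measurability for the Tonelli swaps
    have meas1 : ∀ s : ℝ, AEMeasurable (Function.uncurry fun t r => φ s r * φ t r * G r)
        ((volume.restrict I).prod (volume.restrict I)) := by
      intro s
      have m1 : Measurable fun z : ℝ × ℝ => φ s z.2 * φ z.1 z.2 := by
        apply Measurable.fun_mul
        · apply Measurable.ennreal_ofReal
          fun_prop
        · apply Measurable.ennreal_ofReal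
          fun_prop
      exact m1.aemeasurable.mul hGmeas.comp_snd
    have meas2 : AEMeasurable (Function.uncurry fun s r => φ s r * (G r * C))
        ((volume.restrict I).prod (volume.restrict I)) := by
      have m1 : Measurable fun z : ℝ × ℝ => φ z.1 z.2 := by
        apply Measurable.ennreal_ofReal
        fun_prop
      exact m1.aemeasurable.mul (hGmeas.mul_const C).comp_snd
    calc (∫⁻ s in I, ∫⁻ t in I,
          ENNReal.ofReal (|t - s| ^ (-δ) * ∫ r in Set.Ioo (min s t) (max s t), g r))
        ≤ ∫⁻ s in I, ∫⁻ t in I, ∫⁻ r in I, φ s r * φ t r * G r :=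
          lintegral_mono_ae ((ae_restrict_iff' measurableSet_Ioo).2 (ae_of_all _ fun s hs =>
            lintegral_mono_ae ((ae_restrict_iff' measurableSet_Ioo).2 (ae_of_all _ fun t ht =>
              key s hs t ht))))
      _ = ∫⁻ s in I, ∫⁻ r in I, ∫⁻ t in I, φ s r * φ t r * G r :=
          lintegral_congr fun s => lintegral_lintegral_swap (meas1 s)
      _ ≤ ∫⁻ s in I, ∫⁻ r in I, φ s r * (G r * C) := by
          refine lintegral_mono fun s => lintegral_mono_ae
            ((ae_restrict_iff' measurableSet_Ioo).2 (ae_of_all _ fun r hrI => ?_))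
          have e : ∀ t, φ s r * φ t r * G r = (φ s r * G r) * φ t r := fun t => by ring
          simp_rw [e]
          rw [lintegral_const_mul' _ _
            (ENNReal.mul_ne_top ENNReal.ofReal_ne_top ENNReal.ofReal_ne_top)]
          calc (φ s r * G r) * ∫⁻ t in I, φ t r ≤ (φ s r * G r) * C :=
                mul_le_mul_right (hCb r hrI) _
            _ = φ s r * (G r * C) := by ring
      _ = ∫⁻ r in I, ∫⁻ s in I, φ s r * (G r * C) := lintegral_lintegral_swap meas2
      _ ≤ ∫⁻ r in I, C * (G r * C) := by
          refine lintegral_mono_ae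
            ((ae_restrict_iff' measurableSet_Ioo).2 (ae_of_all _ fun r hrI => ?_))
          rw [lintegral_mul_const' _ _
            (ENNReal.mul_ne_top ENNReal.ofReal_ne_top hC.ne)]
          exact mul_le_mul_left (hCb r hrI) _
      _ = C * C * ∫⁻ r in I, G r := by
          rw [lintegral_const_mul' _ _ hC.ne, lintegral_mul_const' _ _ hC.ne]; ring
      _ < ⊤ := ENNReal.mul_lt_top (ENNReal.mul_lt_top hC hC) hGlt
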